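/- Let ν₊, ν₋ be probability measures on ℝ with dν₊/dν₋(x) = e^x a.e., and let G₊, G₋ be their CDFs. Define D₊(x) = log((1 - G₊(-x))/(1 - G₋(-x))). Then D₊(x)/G₋(-x) → 1 as x → ∞. -/

import Mathlib

open MeasureTheory Set Filter

lemma log_one_sub_slope :
    Tendsto (fun t : ℝ => Real.log (1 - t) / t) (nhdsWithin 0 {0}ᶜ) (nhds (-1)) := by
  have h2 : HasDerivAt (fun t : ℝ => 1 - t) (-1) 0 := by
    simpa using (hasDerivAt_id (0:ℝ)).const_sub 1
  have h1 : HasDerivAt (fun t : ℝ => Real.log (1 - t)) (-1) 0 := by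
    have h3 := (Real.hasDerivAt_log (by norm_num : (1:ℝ) - 0 ≠ 0)).comp 0 h2
    simpa [Function.comp_def] using h3
  have h := hasDerivAt_iff_tendsto_slope.mp h1
  refine h.congr fun t => ?_
  simp [slope_def_field]

theorem stmt_1 (νp νm : Measure ℝ) [IsProbabilityMeasure νp] [IsProbabilityMeasure νm]
    (hac : νp ≪ νm) (hac' : νm ≪ νp)
    (hrn : ∀ᵐ x ∂νm, νp.rnDeriv νm x = ENNReal.ofReal (Real.exp x))
    (Gp Gm : ℝ → ℝ)
    (hGp : ∀ x, Gp x = (νp (Iic x)).toReal)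
    (hGm : ∀ x, Gm x = (νm (Iic x)).toReal)
    (hGmpos : ∀ x, 0 < Gm (-x))
    (hGplt : ∀ x, Gp (-x) < 1) :
    Tendsto (fun x => Real.log ((1 - Gp (-x)) / (1 - Gm (-x))) / Gm (-x))
      atTop (nhds 1) := by
  -- Gm (-x) → 0
  have hGm0 : Tendsto (fun x => Gm (-x)) atTop (nhds 0) := by
    have hmeas : Tendsto (fun x : ℝ => νm (Iic (-x))) atTop (nhds 0) := by
      have h := tendsto_measure_iInter_atTop (μ := νm) (s := fun x : ℝ => Iic (-x))
        (fun i => measurableSet_Iic.nullMeasurableSet)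
        (fun a b hab => Iic_subset_Iic.2 (by linarith)) ⟨0, measure_ne_top _ _⟩
      have hempty : (⋂ x : ℝ, Iic (-x)) = (∅ : Set ℝ) := by
        ext t
        simp only [mem_iInter, mem_Iic, mem_empty_iff_false, iff_false, not_forall, not_le]
        exact ⟨1 - t, by linarith⟩
      simpa [hempty, Function.comp_def] using h
    have := (ENNReal.tendsto_toReal (by simp)).comp hmeas
    simpa [hGm, Function.comp_def] using this
  -- bound: Gp (-x) ≤ exp (-x) * Gm (-x)
  have hbound : ∀ x, Gp (-x) ≤ Real.exp (-x) * Gm (-x) := by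
    intro x
    rw [hGp, hGm]
    have key : νp (Iic (-x)) ≤ ENNReal.ofReal (Real.exp (-x)) * νm (Iic (-x)) := by
      rw [← Measure.setLIntegral_rnDeriv hac (Iic (-x))]
      calc ∫⁻ t in Iic (-x), νp.rnDeriv νm t ∂νm
          = ∫⁻ t in Iic (-x), ENNReal.ofReal (Real.exp t) ∂νm :=
            lintegral_congr_ae (ae_restrict_of_ae hrn)
        _ ≤ ∫⁻ _ in Iic (-x), ENNReal.ofReal (Real.exp (-x)) ∂νm := by
            refine lintegral_mono_ae ?_
            filter_upwards [ae_restrict_mem measurableSet_Iic] with t ht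
            exact ENNReal.ofReal_le_ofReal (Real.exp_le_exp.2 ht)
        _ = ENNReal.ofReal (Real.exp (-x)) * νm (Iic (-x)) := by
            simp [mul_comm]
    calc (νp (Iic (-x))).toReal
        ≤ (ENNReal.ofReal (Real.exp (-x)) * νm (Iic (-x))).toReal :=
          ENNReal.toReal_mono (by finiteness) key
      _ = Real.exp (-x) * (νm (Iic (-x))).toReal := by
          rw [ENNReal.toReal_mul, ENNReal.toReal_ofReal (Real.exp_pos _).le]
  have hGppos : ∀ x, 0 < Gp (-x) := by
    intro x
    rw [hGp]
    refine ENNReal.toReal_pos (fun h0 => ?_) (measure_ne_top _ _)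
    have hm0 := hac' h0
    have := hGmpos x
    rw [hGm, hm0] at this
    simp at this
  -- Gp (-x) → 0
  have hGp0 : Tendsto (fun x => Gp (-x)) atTop (nhds 0) := by
    have hupper : Tendsto (fun x => Real.exp (-x) * Gm (-x)) atTop (nhds 0) := by
      simpa using (Real.tendsto_exp_neg_atTop_nhds_zero.mul hGm0)
    exact tendsto_of_tendsto_of_tendsto_of_le_of_le tendsto_const_nhds hupper
      (fun x => (hGppos x).le) hbound
  -- Gp (-x) / Gm (-x) → 0
  have hratio : Tendsto (fun x => Gp (-x) / Gm (-x)) atTop (nhds 0) := by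
    refine tendsto_of_tendsto_of_tendsto_of_le_of_le tendsto_const_nhds
      Real.tendsto_exp_neg_atTop_nhds_zero
      (fun x => div_nonneg (hGppos x).le (hGmpos x).le) (fun x => ?_)
    rw [div_le_iff₀ (hGmpos x)]
    exact hbound x
  -- compose with slope limit
  have hcompGm : Tendsto (fun x => Gm (-x)) atTop (nhdsWithin 0 {0}ᶜ) :=
    tendsto_nhdsWithin_iff.mpr ⟨hGm0, Eventually.of_forall fun x => (hGmpos x).ne'⟩
  have hcompGp : Tendsto (fun x => Gp (-x)) atTop (nhdsWithin 0 {0}ᶜ) :=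
    tendsto_nhdsWithin_iff.mpr ⟨hGp0, Eventually.of_forall fun x => (hGppos x).ne'⟩
  have T2 : Tendsto (fun x => Real.log (1 - Gm (-x)) / Gm (-x)) atTop (nhds (-1)) :=
    log_one_sub_slope.comp hcompGm
  have Tp : Tendsto (fun x => Real.log (1 - Gp (-x)) / Gp (-x)) atTop (nhds (-1)) :=
    log_one_sub_slope.comp hcompGp
  have T1 : Tendsto (fun x => Real.log (1 - Gp (-x)) / Gm (-x)) atTop (nhds 0) := by
    have := Tp.mul hratio
    rw [show (-1 : ℝ) * 0 = 0 by ring] at this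
    refine this.congr fun x => ?_
    rw [div_mul_div_comm, mul_comm (Gp (-x)), mul_div_mul_right _ _ (hGppos x).ne']
  have hGmlt1 : ∀ᶠ x in atTop, Gm (-x) < 1 := hGm0.eventually_lt_const zero_lt_one
  have hfinal := T1.sub T2
  rw [show (0 : ℝ) - -1 = 1 by ring] at hfinal
  refine hfinal.congr' ?_
  filter_upwards [hGmlt1] with x hx
  rw [Real.log_div (by linarith [hGplt x]) (by linarith), sub_div]
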